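/- Let k be a field of characteristic zero and let k⟨x_1,…,x_n,y⟩ be the free associative k-algebra on n+1 generators. Then for every multi-index K = (K_1,…,K_n) ∈ ℕ^n, the identity x^K · y = Σ_{0 ≤ s ≤ K} (∏_{i=1}^n C(K_i, s_i)) · [x^{K−s} y]] · x^s holds, where the sum is over multi-indices s ∈ ℕ^n with s_i ≤ K_i for all i, C(·,·) denotes binomial coefficients, and [x^m y]] denotes the complete bracket of the word consisting of m_1 copies of x_1, …, m_n copies of x_n, followed by y (so [x^0 y]] = y). -/

import Mathlib

/-!
Statement 14: an identity in the free associative algebra `k⟨x₁, …, x_n, y⟩`.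
`cbrk` is the complete bracket, `xPow K = x₁^{K₁} ⋯ x_n^{K_n}` and
`xyWord m` is the word consisting of `m₁` copies of `x₁`, …, `m_n` copies of
`x_n`, followed by `y` (so `cbrk (xyWord 0) = y`).
-/

noncomputable section

variable (k : Type*) [Field k]

/-- The complete bracket `[a₁, …, a_m]]`. -/
def cbrk {B : Type*} [Ring B] : List B → B
  | [] => 0
  | [a] => a
  | a :: b :: rest => a * cbrk (b :: rest) - cbrk (b :: rest) * a

/-- The ordered monomial `x^K = x₁^{K₁} ⋯ x_n^{K_n}`. -/
def xPow (n : ℕ) (K : Fin n → ℕ) : FreeAlgebra k (Fin n ⊕ Unit) :=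
  (List.ofFn fun i => FreeAlgebra.ι k (Sum.inl i) ^ K i).prod

/-- The word consisting of `m₁` copies of `x₁`, …, `m_n` copies of `x_n`,
followed by `y`. -/
def xyWord (n : ℕ) (m : Fin n → ℕ) : List (FreeAlgebra k (Fin n ⊕ Unit)) :=
  (List.ofFn fun i => List.replicate (m i) (FreeAlgebra.ι k (Sum.inl i))).flatten ++
    [FreeAlgebra.ι k (Sum.inr ())]

section Aux

variable {B : Type*} [Ring B]

/-- Iterated `ad`: `adp a m b = (ad a)^m b`. -/
def adp (a : B) : ℕ → B → B
  | 0, b => b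
  | m + 1, b => a * adp a m b - adp a m b * a

lemma adp_succ (a : B) (m : ℕ) (b : B) :
    adp a (m + 1) b = a * adp a m b - adp a m b * a := rfl

lemma cbrk_cons_cons (a d : B) (rest : List B) :
    cbrk (a :: d :: rest) = a * cbrk (d :: rest) - cbrk (d :: rest) * a := rfl

lemma cbrk_replicate_append (a : B) (m : ℕ) {l : List B} (hl : l ≠ []) :
    cbrk (List.replicate m a ++ l) = adp a m (cbrk l) := by
  induction m with
  | zero => simp [adp]
  | succ m ih =>
    cases h : List.replicate m a ++ l with
    | nil => simp [hl] at h
    | cons d rest =>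
      rw [List.replicate_succ, List.cons_append, h, cbrk_cons_cons, ← h, ih, adp_succ]

/-- Reindexing sums over `Iic` of a pi type over `Fin (n + 1)`. -/
lemma sum_Iic_cons {M : Type*} [AddCommMonoid M] (n : ℕ) (K : Fin (n + 1) → ℕ)
    (F : (Fin (n + 1) → ℕ) → M) :
    ∑ s ∈ Finset.Iic K, F s =
      ∑ j ∈ Finset.Iic (K 0), ∑ t ∈ Finset.Iic (Fin.tail K), F (Fin.cons j t) := by
  rw [← Finset.sum_product']
  refine Finset.sum_nbij' (fun s => (s 0, Fin.tail s)) (fun p => Fin.cons p.1 p.2)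
    ?_ ?_ ?_ ?_ ?_
  · intro s hs
    simp only [Finset.mem_Iic, Finset.mem_product] at *
    exact ⟨hs 0, fun i => hs i.succ⟩
  · intro p hp
    simp only [Finset.mem_Iic, Finset.mem_product] at *
    intro i
    refine Fin.cases ?_ ?_ i
    · simpa using hp.1
    · intro j; simpa [Fin.tail] using hp.2 j
  · intro s _; exact Fin.cons_self_tail s
  · intro p _; simp [Fin.tail]
  · intro s _; rw [Fin.cons_self_tail]

/-- The one-variable ad-binomial identity:
`a^m b = Σ_j C(m,j) (ad a)^{m-j}(b) a^j`. -/
lemma pow_mul_eq_sum_adp (a b : B) (m : ℕ) :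
    a ^ m * b = ∑ j ∈ Finset.range (m + 1), m.choose j • (adp a (m - j) b * a ^ j) := by
  induction m with
  | zero => simp [adp]
  | succ m ih =>
    rw [pow_succ', mul_assoc, ih, Finset.mul_sum]
    have key : ∀ j ∈ Finset.range (m + 1),
        a * (m.choose j • (adp a (m - j) b * a ^ j)) =
          m.choose j • (adp a (m - j + 1) b * a ^ j)
            + m.choose j • (adp a (m - j) b * a ^ (j + 1)) := by
      intro j hj
      rw [mul_smul_comm, ← smul_add]
      congr 1
      rw [adp_succ, sub_mul, pow_succ']
      noncomm_ring
    rw [Finset.sum_congr rfl key, Finset.sum_add_distrib]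
    conv_rhs => rw [Finset.sum_range_succ']
    conv_lhs =>
      rw [Finset.sum_range_succ (fun j => m.choose j • (adp a (m - j) b * a ^ (j + 1))),
        Finset.sum_range_succ' (fun j => m.choose j • (adp a (m - j + 1) b * a ^ j))]
    have e1 : ∀ j ∈ Finset.range m,
        m.choose (j + 1) • (adp a (m - (j + 1) + 1) b * a ^ (j + 1))
          + m.choose j • (adp a (m - j) b * a ^ (j + 1)) =
        (m + 1).choose (j + 1) • (adp a (m + 1 - (j + 1)) b * a ^ (j + 1)) := by
      intro j hj
      simp only [Finset.mem_range] at hj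
      have h1 : m - (j + 1) + 1 = m - j := by omega
      have h2 : m + 1 - (j + 1) = m - j := by omega
      rw [h1, h2, ← add_smul, Nat.choose_succ_succ, add_comm (m.choose j)]
    conv_rhs => rw [Finset.sum_range_succ]
    have hsum := Finset.sum_congr rfl e1
    rw [Finset.sum_add_distrib] at hsum
    rw [← hsum]
    have hT : m.choose m • (adp a (m - m) b * a ^ (m + 1)) =
        (m + 1).choose (m + 1) • (adp a (m + 1 - (m + 1)) b * a ^ (m + 1)) := by simp
    have hS : m.choose 0 • (adp a (m - 0 + 1) b * a ^ 0) =
        (m + 1).choose 0 • (adp a (m + 1 - 0) b * a ^ 0) := by simp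
    rw [hT, hS]
    abel

/-- The multivariable identity, in an arbitrary ring, with natural-number
coefficients. -/
lemma gen_identity (n : ℕ) (x : Fin n → B) (y : B) (K : Fin n → ℕ) :
    (List.ofFn fun i => x i ^ K i).prod * y =
      ∑ s ∈ Finset.Iic K, (∏ i, (K i).choose (s i)) •
        (cbrk ((List.ofFn fun i => List.replicate ((K - s) i) (x i)).flatten ++ [y])
          * (List.ofFn fun i => x i ^ s i).prod) := by
  induction n with
  | zero =>
    have hK : Finset.Iic K = {K} := by
      ext s
      simp [Subsingleton.elim s K]
    simp [hK, cbrk]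
  | succ n ih =>
    set a := x 0 with ha
    set x' : Fin n → B := fun i => x i.succ with hx'
    set m := K 0 with hm
    set K' : Fin n → ℕ := fun i => K i.succ with hK'
    have lhs1 : (List.ofFn fun i => x i ^ K i).prod * y
        = a ^ m * ((List.ofFn fun i => x' i ^ K' i).prod * y) := by
      rw [List.ofFn_succ, List.prod_cons, mul_assoc]
    rw [lhs1, ih x' K', Finset.mul_sum]
    rw [sum_Iic_cons]
    have htail : Fin.tail K = K' := rfl
    rw [htail]
    have hrange : Finset.Iic m = Finset.range (m + 1) := by
      ext j; simp [Nat.lt_succ_iff]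
    rw [hrange]
    rw [Finset.sum_comm]
    apply Finset.sum_congr rfl
    intro t ht
    simp only [Finset.mem_Iic] at ht
    rw [mul_smul_comm, ← mul_assoc, pow_mul_eq_sum_adp a _ m, Finset.sum_mul,
      Finset.smul_sum, Finset.sum_congr rfl]
    intro j hj
    simp only [Finset.mem_range, Nat.lt_succ_iff] at hj
    rw [smul_mul_assoc, smul_smul]
    have hcoeff : (∏ i, (K' i).choose (t i)) * m.choose j
        = ∏ i, (K i).choose ((Fin.cons j t : Fin (n+1) → ℕ) i) := by
      rw [Fin.prod_univ_succ]
      simp [mul_comm]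
      rfl
    rw [hcoeff]
    congr 1
    have hword : ((List.ofFn fun i =>
            List.replicate ((K - (Fin.cons j t : Fin (n+1) → ℕ)) i) (x i)).flatten
          ++ [y])
        = List.replicate (m - j) a ++
          ((List.ofFn fun i => List.replicate ((K' - t) i) (x' i)).flatten ++ [y]) := by
      rw [List.ofFn_succ]
      simp only [List.flatten_cons, List.append_assoc]
      congr 2
    have hprod : (List.ofFn fun i => x i ^ (Fin.cons j t : Fin (n+1) → ℕ) i).prod
        = a ^ j * (List.ofFn fun i => x' i ^ t i).prod := by
      rw [List.ofFn_succ, List.prod_cons]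
      simp only [Fin.cons_zero, Fin.cons_succ]
      rfl
    rw [hword, hprod, cbrk_replicate_append a (m - j) (by simp), mul_assoc]

end Aux

/-- In the free associative algebra `k⟨x₁, …, x_n, y⟩` over a
field of characteristic zero, for every multi-index `K`,
`x^K y = Σ_{0 ≤ s ≤ K} (Π C(K_i, s_i)) [x^{K-s} y]] x^s`. -/
theorem statement14 [CharZero k] (n : ℕ) (K : Fin n → ℕ) :
    xPow k n K * FreeAlgebra.ι k (Sum.inr ()) =
      ∑ s ∈ Finset.Iic K,
        (∏ i, ((K i).choose (s i) : k)) •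
          (cbrk (xyWord k n (K - s)) * xPow k n s) := by
  have h := gen_identity n (fun i => FreeAlgebra.ι k (Sum.inl i))
    (FreeAlgebra.ι k (Sum.inr ())) K
  simp only [xPow, xyWord]
  rw [h]
  apply Finset.sum_congr rfl
  intro s _
  rw [← Nat.cast_prod, Nat.cast_smul_eq_nsmul]
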